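/- For all natural numbers n and k with 1 ≤ k ≤ n, letting m = ⌊n/k⌋ (integer floor division), it holds that (k/n)·Σ_{t=m+1}^{n} exp(−t·k/n) ≤ 1.7/e. -/
import Mathlib

lemma aux_exp_poly {x : ℝ} (hx0 : 0 ≤ x) (hx1 : x ≤ 1) :
    Real.exp (-x) ≤ 1 - x + x^2/2 - x^3/6 + 5*x^4/96 := by
  have hb := Real.exp_bound (x := -x) (by rw [abs_neg, abs_of_nonneg hx0]; exact hx1)
    (n := 4) (by norm_num)
  rw [abs_neg, abs_of_nonneg hx0] at hb
  have h := (abs_sub_le_iff.1 hb).1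
  have hsum : ∑ m ∈ Finset.range 4, (-x) ^ m / (Nat.factorial m) = 1 - x + x^2/2 - x^3/6 := by
    simp [Finset.sum_range_succ, Nat.factorial]
    ring
  rw [hsum] at h
  norm_num [Nat.factorial] at h
  linarith

lemma aux_key {x : ℝ} (hx0 : 0 < x) (hx1 : x ≤ 1) :
    x ≤ 1.7 * (1 - Real.exp (-x)) := by
  have h := aux_exp_poly hx0.le hx1
  nlinarith [sq_nonneg x, sq_nonneg (1 - x), mul_pos hx0 hx0,
    mul_pos (mul_pos hx0 hx0) hx0, mul_nonneg (mul_nonneg hx0.le hx0.le) (sub_nonneg.2 hx1),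
    mul_nonneg (mul_nonneg (mul_nonneg hx0.le hx0.le) hx0.le) (sub_nonneg.2 hx1)]

theorem stmt_6 (n k : ℕ) (hk : 1 ≤ k) (hkn : k ≤ n) :
    ((k : ℝ) / n) * ∑ t ∈ Finset.Icc (n / k + 1) n, Real.exp (-((t : ℝ) * k / n))
      ≤ 1.7 / Real.exp 1 := by
  have hn : 0 < n := lt_of_lt_of_le hk hkn
  have hn' : (0:ℝ) < n := by exact_mod_cast hn
  set x : ℝ := (k : ℝ) / n with hxdef
  have hx0 : 0 < x := div_pos (by exact_mod_cast hk) hn'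
  have hx1 : x ≤ 1 := by
    rw [hxdef, div_le_one hn']; exact_mod_cast hkn
  set r := Real.exp (-x) with hrdef
  have hr0 : 0 < r := Real.exp_pos _
  have hr1 : r < 1 := Real.exp_lt_one_iff.2 (neg_neg_iff_pos.2 hx0)
  have h1r : 0 < 1 - r := by linarith
  have hterm : ∀ t : ℕ, Real.exp (-((t:ℝ) * k / n)) = r ^ t := by
    intro t
    rw [hrdef, ← Real.exp_nat_mul]
    congr 1
    rw [hxdef]; ring
  rw [Finset.sum_congr rfl fun t _ => hterm t]
  set m := n / k with hm
  -- geometric sum bound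
  have hgeom : ∑ t ∈ Finset.Icc (m + 1) n, r ^ t ≤ r ^ (m + 1) * (1 - r)⁻¹ := by
    rw [← Finset.Ico_add_one_right_eq_Icc, Finset.sum_Ico_eq_sum_range]
    have : ∀ i ∈ Finset.range (n + 1 - (m + 1)), r ^ (m + 1 + i) = r ^ (m + 1) * r ^ i := by
      intro i _; rw [pow_add]
    rw [Finset.sum_congr rfl this, ← Finset.mul_sum]
    refine mul_le_mul_of_nonneg_left ?_ (pow_nonneg hr0.le _)
    have hts := tsum_geometric_of_lt_one hr0.le hr1
    calc ∑ i ∈ Finset.range (n + 1 - (m + 1)), r ^ i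
        ≤ ∑' i : ℕ, r ^ i := by
          exact Summable.sum_le_tsum _ (fun i _ => pow_nonneg hr0.le i)
            (summable_geometric_of_lt_one hr0.le hr1)
      _ = (1 - r)⁻¹ := hts
  have hpow : r ^ (m + 1) ≤ Real.exp (-1) := by
    rw [hrdef, ← Real.exp_nat_mul]
    apply Real.exp_le_exp.2
    have hnk : (n : ℝ) < ((m + 1) * k : ℕ) := by
      have : n < (m + 1) * k := by
        rw [hm]
        calc n = k * (n / k) + n % k := (Nat.div_add_mod n k).symm
          _ < k * (n / k) + k := by
              exact Nat.add_lt_add_left (Nat.mod_lt n hk) _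
          _ = (n / k + 1) * k := by ring
      exact_mod_cast this
    push_cast at hnk ⊢
    have h1 : (1 : ℝ) ≤ ((m : ℝ) + 1) * x := by
      rw [hxdef, mul_div_assoc', le_div_iff₀ hn', one_mul]
      linarith
    nlinarith [h1]
  have hkey : x * (1 - r)⁻¹ ≤ 1.7 := by
    calc x * (1 - r)⁻¹ ≤ (1.7 * (1 - r)) * (1 - r)⁻¹ := by
          exact mul_le_mul_of_nonneg_right (aux_key hx0 hx1) (inv_nonneg.2 h1r.le)
      _ = 1.7 := by field_simp
  calc x * ∑ t ∈ Finset.Icc (m + 1) n, r ^ t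
      ≤ x * (r ^ (m + 1) * (1 - r)⁻¹) := by
        exact mul_le_mul_of_nonneg_left hgeom hx0.le
    _ ≤ x * (Real.exp (-1) * (1 - r)⁻¹) := by
        refine mul_le_mul_of_nonneg_left ?_ hx0.le
        exact mul_le_mul_of_nonneg_right hpow (inv_nonneg.2 h1r.le)
    _ = (x * (1 - r)⁻¹) * Real.exp (-1) := by ring
    _ ≤ 1.7 * Real.exp (-1) := by
        exact mul_le_mul_of_nonneg_right hkey (Real.exp_pos _).le
    _ = 1.7 / Real.exp 1 := by rw [Real.exp_neg, div_eq_mul_inv]
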